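/- Discrete Hodge decomposition in degree 2 (Proposition 3.4, r = 2): the space of discrete 2-forms on the periodic grid is the internal direct sum of the two orthogonal subspaces range(d¹) and ker(Δ²). -/

import Mathlib

/-- Discrete 0-forms on the periodic grid `ZMod N × ZMod M`. -/
abbrev Form0 (N M : ℕ) := ZMod N × ZMod M → ℝ
/-- Discrete 1-forms on the periodic grid `ZMod N × ZMod M`: pairs of functions. -/
abbrev Form1 (N M : ℕ) := (ZMod N × ZMod M → ℝ) × (ZMod N × ZMod M → ℝ)
/-- Discrete 2-forms on the periodic grid `ZMod N × ZMod M`. -/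
abbrev Form2 (N M : ℕ) := ZMod N × ZMod M → ℝ

/-- Discrete exterior derivative on 0-forms. -/
def d0 (N M : ℕ) : Form0 N M →ₗ[ℝ] Form1 N M where
  toFun φ := (fun p => φ (p.1 + 1, p.2) - φ p, fun p => φ (p.1, p.2 + 1) - φ p)
  map_add' φ ψ := by refine Prod.ext ?_ ?_ <;> funext p <;> simp <;> ring
  map_smul' c φ := by refine Prod.ext ?_ ?_ <;> funext p <;> simp <;> ring

/-- Discrete exterior derivative on 1-forms. -/
def d1 (N M : ℕ) : Form1 N M →ₗ[ℝ] Form2 N M where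
  toFun ω := fun p => (ω.2 (p.1 + 1, p.2) - ω.2 p) - (ω.1 (p.1, p.2 + 1) - ω.1 p)
  map_add' ω η := by funext p; simp; ring
  map_smul' c ω := by funext p; simp; ring

/-- Discrete codifferential on 1-forms. -/
def delta1 (N M : ℕ) : Form1 N M →ₗ[ℝ] Form0 N M where
  toFun ω := fun p => (ω.1 (p.1 - 1, p.2) - ω.1 p) + (ω.2 (p.1, p.2 - 1) - ω.2 p)
  map_add' ω η := by funext p; simp; ring
  map_smul' c ω := by funext p; simp; ring

/-- Discrete codifferential on 2-forms. -/
def delta2 (N M : ℕ) : Form2 N M →ₗ[ℝ] Form1 N M where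
  toFun ψ := (fun p => ψ p - ψ (p.1, p.2 - 1), fun p => ψ (p.1 - 1, p.2) - ψ p)
  map_add' ψ χ := by refine Prod.ext ?_ ?_ <;> funext p <;> simp <;> ring
  map_smul' c ψ := by refine Prod.ext ?_ ?_ <;> funext p <;> simp <;> ring

/-- Discrete Laplacian on 0-forms: `Δ⁰ = δ¹ ∘ d⁰`. -/
def lap0 (N M : ℕ) : Form0 N M →ₗ[ℝ] Form0 N M := delta1 N M ∘ₗ d0 N M
/-- Discrete Laplacian on 1-forms: `Δ¹ = d⁰ ∘ δ¹ + δ² ∘ d¹`. -/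
def lap1 (N M : ℕ) : Form1 N M →ₗ[ℝ] Form1 N M :=
  d0 N M ∘ₗ delta1 N M + delta2 N M ∘ₗ d1 N M
/-- Discrete Laplacian on 2-forms: `Δ² = d¹ ∘ δ²`. -/
def lap2 (N M : ℕ) : Form2 N M →ₗ[ℝ] Form2 N M := d1 N M ∘ₗ delta2 N M

/-- Inner product of two 0-forms (or two 2-forms). -/
def inner0 (N M : ℕ) [NeZero N] [NeZero M] (φ ψ : Form0 N M) : ℝ := ∑ p, φ p * ψ p
/-- Inner product of two 1-forms. -/
def inner1 (N M : ℕ) [NeZero N] [NeZero M] (ω η : Form1 N M) : ℝ :=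
  ∑ p, (ω.1 p * η.1 p + ω.2 p * η.2 p)


section Aux
variable (N M : ℕ) [NeZero N] [NeZero M]

lemma sum_shift_fst (f : ZMod N × ZMod M → ℝ) :
    ∑ p : ZMod N × ZMod M, f (p.1 + 1, p.2) = ∑ p, f p := by
  rw [← Equiv.sum_comp ((Equiv.addRight (1 : ZMod N)).prodCongr (Equiv.refl (ZMod M))) f]
  rfl

lemma sum_shift_snd (f : ZMod N × ZMod M → ℝ) :
    ∑ p : ZMod N × ZMod M, f (p.1, p.2 + 1) = ∑ p, f p := by
  rw [← Equiv.sum_comp ((Equiv.refl (ZMod N)).prodCongr (Equiv.addRight (1 : ZMod M))) f]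
  rfl

lemma adj12 (ω : Form1 N M) (ψ : Form2 N M) :
    inner0 N M (d1 N M ω) ψ = inner1 N M ω (delta2 N M ψ) := by
  simp only [inner0, inner1, d1, delta2, LinearMap.coe_mk, AddHom.coe_mk]
  have h1 := sum_shift_fst N M (fun p => ω.2 p * ψ (p.1 - 1, p.2))
  have h2 := sum_shift_snd N M (fun p => ω.1 p * ψ (p.1, p.2 - 1))
  simp only [add_sub_cancel_right] at h1 h2
  simp only [sub_mul, mul_sub, Finset.sum_sub_distrib, Finset.sum_add_distrib, h1, h2]
  ring

lemma inner0_self (ψ : Form2 N M) (h : inner0 N M ψ ψ = 0) : ψ = 0 := by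
  funext p
  have := (Finset.sum_eq_zero_iff_of_nonneg (fun p _ => mul_self_nonneg (ψ p))).mp h p (Finset.mem_univ p)
  have := mul_self_eq_zero.mp this
  simpa using this

lemma inner1_self (ω : Form1 N M) (h : inner1 N M ω ω = 0) : ω = 0 := by
  have key := (Finset.sum_eq_zero_iff_of_nonneg
    (fun p _ => add_nonneg (mul_self_nonneg (ω.1 p)) (mul_self_nonneg (ω.2 p)))).mp h
  refine Prod.ext ?_ ?_ <;> funext p <;>
  · have := key p (Finset.mem_univ p)
    have h1 : ω.1 p * ω.1 p = 0 ∧ ω.2 p * ω.2 p = 0 := by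
      constructor <;> nlinarith [mul_self_nonneg (ω.1 p), mul_self_nonneg (ω.2 p)]
    simp only [mul_self_eq_zero] at h1
    simp [h1.1, h1.2]

lemma ker_lap2_iff (ψ : Form2 N M) : lap2 N M ψ = 0 ↔ delta2 N M ψ = 0 := by
  constructor
  · intro h
    apply inner1_self
    have : inner0 N M (d1 N M (delta2 N M ψ)) ψ = 0 := by
      have : d1 N M (delta2 N M ψ) = lap2 N M ψ := rfl
      rw [this, h]; simp [inner0]
    rw [adj12] at this
    exact this
  · intro h
    show d1 N M (delta2 N M ψ) = 0
    rw [h, map_zero]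

end Aux

section Euc
variable (N M : ℕ) [NeZero N] [NeZero M]

noncomputable def L2 : EuclideanSpace ℝ (ZMod N × ZMod M) ≃ₗ[ℝ] Form2 N M :=
  WithLp.linearEquiv 2 ℝ _

lemma inner_eq (a b : EuclideanSpace ℝ (ZMod N × ZMod M)) :
    (inner ℝ a b : ℝ) = inner0 N M (L2 N M a) (L2 N M b) := by
  simp [PiLp.inner_apply, RCLike.inner_apply, inner0, L2, mul_comm]

lemma orth_key : ∀ a ∈ LinearMap.range (d1 N M), ∀ h ∈ LinearMap.ker (lap2 N M),
    inner0 N M a h = 0 := by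
  rintro a ⟨ω, rfl⟩ h hh
  rw [adj12, (ker_lap2_iff N M h).mp hh]
  simp [inner1]

lemma ker_eq_orth :
    (LinearMap.ker (lap2 N M)).comap (L2 N M).toLinearMap
      = ((LinearMap.range (d1 N M)).comap (L2 N M).toLinearMap)ᗮ := by
  ext x
  simp only [Submodule.mem_comap, LinearEquiv.coe_coe, LinearMap.mem_ker,
    Submodule.mem_orthogonal, Submodule.mem_comap, LinearMap.mem_range]
  constructor
  · rintro hx u ⟨ω, hω⟩
    rw [inner_eq, ← hω]
    exact orth_key N M _ ⟨ω, rfl⟩ _ hx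
  · intro h
    rw [ker_lap2_iff]
    apply inner1_self
    rw [← adj12]
    have := h ((L2 N M).symm (d1 N M (delta2 N M (L2 N M x)))) (by
      refine ⟨delta2 N M (L2 N M x), ?_⟩
      simp)
    rw [inner_eq] at this
    simpa using this
end Euc

theorem discrete_hodge_decomposition_deg2 (N M : ℕ) [NeZero N] [NeZero M] :
    (∀ a ∈ LinearMap.range (d1 N M), ∀ h ∈ LinearMap.ker (lap2 N M),
        inner0 N M a h = 0) ∧
    ∀ ψ : Form2 N M,
      ∃! x : LinearMap.range (d1 N M) × LinearMap.ker (lap2 N M),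
        ψ = (x.1 : Form2 N M) + (x.2 : Form2 N M) := by
  refine ⟨orth_key N M, fun ψ => ?_⟩
  set R' := (LinearMap.range (d1 N M)).comap (L2 N M).toLinearMap with hR'
  have hsup : R' ⊔ R'ᗮ = ⊤ := Submodule.sup_orthogonal_of_hasOrthogonalProjection
  rw [← ker_eq_orth] at hsup
  have hx : (L2 N M).symm ψ ∈ R' ⊔ (LinearMap.ker (lap2 N M)).comap (L2 N M).toLinearMap := by
    rw [hsup]; trivial
  obtain ⟨a, ha, b, hb, hab⟩ := Submodule.mem_sup.mp hx
  rw [Submodule.mem_comap] at ha hb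
  refine ⟨⟨⟨L2 N M a, ha⟩, ⟨L2 N M b, hb⟩⟩, ?_, ?_⟩
  · show ψ = L2 N M a + L2 N M b
    rw [← map_add, hab, LinearEquiv.apply_symm_apply]
  · rintro ⟨⟨a', ha'⟩, ⟨b', hb'⟩⟩ heq
    simp only at heq
    have hψ : ψ = L2 N M a + L2 N M b := by
      rw [← map_add, hab, LinearEquiv.apply_symm_apply]
    have hdiff : a' - L2 N M a = L2 N M b - b' := by
      have : a' + b' = L2 N M a + L2 N M b := by rw [← hψ, ← heq]
      linear_combination this
    have hmem1 : a' - L2 N M a ∈ LinearMap.range (d1 N M) := sub_mem ha' ha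
    have hmem2 : a' - L2 N M a ∈ LinearMap.ker (lap2 N M) := by
      rw [hdiff]; exact sub_mem hb hb'
    have hzero : a' - L2 N M a = 0 := by
      apply inner0_self
      exact orth_key N M _ hmem1 _ hmem2
    have h1 : a' = L2 N M a := by linear_combination hzero
    have h2 : b' = L2 N M b := by
      have := hdiff; rw [hzero] at this
      exact (sub_eq_zero.mp this.symm).symm
    ext <;> simp [h1, h2]
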